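/- Let n ≥ 1 and for each i ∈ {1,...,n} let v^i ∈ ℝⁿ be a vector with v^i_i = 1/2 and |v^i_j| ≤ 1 for all j. Let y_1,...,y_n be independent random variables, each uniformly distributed on [−1,1], and set u = Σ_{i=1}^n y_i v^i. Then Pr[min_i |u_i| ≤ 1/(4n)] ≤ 1/2. -/

import Mathlib

open MeasureTheory ProbabilityTheory

lemma key_smooth {Ω : Type*} [MeasurableSpace Ω] (μ : Measure Ω) [IsProbabilityMeasure μ]
    (X Z : Ω → ℝ) (hX : Measurable X) (hZ : Measurable Z)
    (hindep : IndepFun Z X μ)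
    (hunif : Measure.map X μ = (2 : ENNReal)⁻¹ • (volume.restrict (Set.Icc (-1 : ℝ) 1)))
    (ε : ℝ) :
    μ {ω | |Z ω + X ω * (1/2)| ≤ ε} ≤ ENNReal.ofReal (2 * ε) := by
  have hA : MeasurableSet {p : ℝ × ℝ | |p.1 + p.2 * (1/2)| ≤ ε} := by
    have : Continuous fun p : ℝ × ℝ => |p.1 + p.2 * (1/2)| := by fun_prop
    exact isClosed_le this continuous_const |>.measurableSet
  have hpair : Measurable fun ω => (Z ω, X ω) := hZ.prodMk hX
  have hmap : Measure.map (fun ω => (Z ω, X ω)) μ = (Measure.map Z μ).prod (Measure.map X μ) :=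
    (indepFun_iff_map_prod_eq_prod_map_map hZ.aemeasurable hX.aemeasurable).1 hindep
  have hev : {ω | |Z ω + X ω * (1/2)| ≤ ε}
      = (fun ω => (Z ω, X ω)) ⁻¹' {p : ℝ × ℝ | |p.1 + p.2 * (1/2)| ≤ ε} := rfl
  rw [hev, ← Measure.map_apply hpair hA, hmap, Measure.prod_apply hA]
  have hbd : ∀ z : ℝ, (Measure.map X μ) {x : ℝ | |z + x * (1/2)| ≤ ε}
      ≤ ENNReal.ofReal (2 * ε) := by
    intro z
    have hset : {x : ℝ | |z + x * (1/2)| ≤ ε} = Set.Icc (2*(-ε - z)) (2*(ε - z)) := by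
      ext x
      simp only [Set.mem_setOf_eq, Set.mem_Icc, abs_le]
      constructor <;> intro h <;> constructor <;> linarith [h.1, h.2]
    rw [hset, hunif]
    simp only [Measure.smul_apply, smul_eq_mul]
    rw [Measure.restrict_apply measurableSet_Icc]
    calc (2 : ENNReal)⁻¹ * volume (Set.Icc (2*(-ε - z)) (2*(ε - z)) ∩ Set.Icc (-1 : ℝ) 1)
        ≤ (2 : ENNReal)⁻¹ * volume (Set.Icc (2*(-ε - z)) (2*(ε - z))) := by
          gcongr; exact Set.inter_subset_left
      _ = (2 : ENNReal)⁻¹ * ENNReal.ofReal (4 * ε) := by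
          rw [Real.volume_Icc]; ring_nf
      _ = ENNReal.ofReal (2 * ε) := by
          rw [show (4 : ℝ) * ε = 2 * (2 * ε) by ring, ENNReal.ofReal_mul (by norm_num)]
          rw [← mul_assoc, ENNReal.ofReal_ofNat, ENNReal.inv_mul_cancel (by norm_num) (by norm_num),
            one_mul]
  calc ∫⁻ z, (Measure.map X μ) (Prod.mk z ⁻¹' {p : ℝ × ℝ | |p.1 + p.2 * (1/2)| ≤ ε}) ∂(Measure.map Z μ)
      ≤ ∫⁻ _, ENNReal.ofReal (2 * ε) ∂(Measure.map Z μ) := lintegral_mono fun z => hbd z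
    _ = ENNReal.ofReal (2 * ε) := by
        have : IsProbabilityMeasure (Measure.map Z μ) := Measure.isProbabilityMeasure_map hZ.aemeasurable
        simp

/-- Let `v 1, …, v n` be vectors with `v i i = 1/2` and `|v i j| ≤ 1`, and let
`y 1, …, y n` be independent random variables, each uniform on `[-1, 1]`. Setting
`u = ∑ i, y i • v i`, we have `Pr[min_i |u i| ≤ 1/(4n)] ≤ 1/2`. -/
theorem prob_min_coordinate_small_le_half
    {Ω : Type*} [MeasurableSpace Ω] (μ : Measure Ω) [IsProbabilityMeasure μ]
    (n : ℕ) (hn : 1 ≤ n)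
    (v : Fin n → Fin n → ℝ)
    (hvdiag : ∀ i, v i i = 1/2) (hvbd : ∀ i j, |v i j| ≤ 1)
    (y : Fin n → Ω → ℝ) (hmeas : ∀ i, Measurable (y i))
    (hindep : iIndepFun y μ)
    (hunif : ∀ i, Measure.map (y i) μ
      = (2 : ENNReal)⁻¹ • (volume.restrict (Set.Icc (-1 : ℝ) 1))) :
    μ {ω | ∃ i : Fin n, |∑ j, y j ω * v j i| ≤ 1 / (4 * n)} ≤ 1 / 2 := by
  set ε : ℝ := 1 / (4 * n) with hεdef
  -- per-coordinate bound
  have hone : ∀ i : Fin n, μ {ω | |∑ j, y j ω * v j i| ≤ ε} ≤ ENNReal.ofReal (2 * ε) := by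
    intro i
    -- modified family
    set g : Fin n → Ω → ℝ := fun j => (fun x : ℝ => if j = i then x else x * v j i) ∘ y j with hg
    have hgindep : iIndepFun g μ :=
      hindep.comp _ (fun j => by
        by_cases h : j = i <;> simp [h] <;> fun_prop)
    have hgmeas : ∀ j, Measurable (g j) := fun j => by
      have := hmeas j
      by_cases h : j = i <;> simp only [hg, h, if_pos, if_neg, Function.comp_def, ne_eq,
        not_false_iff] <;> fun_prop
    have hI : IndepFun (∑ j ∈ Finset.univ.erase i, g j) (g i) μ :=
      hgindep.indepFun_finsetSum_of_notMem hgmeas (Finset.notMem_erase i _)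
    set Z : Ω → ℝ := fun ω => ∑ j ∈ Finset.univ.erase i, y j ω * v j i with hZdef
    have hZeq : (∑ j ∈ Finset.univ.erase i, g j) = Z := by
      funext ω
      rw [Finset.sum_apply]
      refine Finset.sum_congr rfl fun j hj => ?_
      have : j ≠ i := Finset.ne_of_mem_erase hj
      simp [hg, this]
    have hgi : g i = y i := by funext ω; simp [hg]
    rw [hZeq, hgi] at hI
    have hZmeas : Measurable Z := by
      apply Finset.measurable_sum
      intro j _
      exact (hmeas j).mul_const _
    have hevset : {ω | |∑ j, y j ω * v j i| ≤ ε} = {ω | |Z ω + y i ω * (1/2)| ≤ ε} := by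
      ext ω
      have : (∑ j, y j ω * v j i) = Z ω + y i ω * v i i := by
        rw [hZdef]
        exact (Finset.sum_erase_add Finset.univ _ (Finset.mem_univ i)).symm
      simp [this, hvdiag i]
    rw [hevset]
    exact key_smooth μ (y i) Z (hmeas i) hZmeas hI (hunif i) ε
  -- union bound
  have hunion : {ω | ∃ i : Fin n, |∑ j, y j ω * v j i| ≤ ε}
      = ⋃ i : Fin n, {ω | |∑ j, y j ω * v j i| ≤ ε} := by
    ext ω; simp
  calc μ {ω | ∃ i : Fin n, |∑ j, y j ω * v j i| ≤ ε}
      ≤ ∑ i : Fin n, μ {ω | |∑ j, y j ω * v j i| ≤ ε} := by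
        rw [hunion]; exact measure_iUnion_fintype_le _ _
    _ ≤ ∑ _i : Fin n, ENNReal.ofReal (2 * ε) := Finset.sum_le_sum fun i _ => hone i
    _ = (n : ENNReal) * ENNReal.ofReal (2 * ε) := by
        rw [Finset.sum_const, Finset.card_univ, Fintype.card_fin, nsmul_eq_mul]
    _ = ENNReal.ofReal ((n : ℝ) * (2 * ε)) := by
        rw [show ENNReal.ofReal ((n:ℝ) * (2*ε)) = ENNReal.ofReal (n:ℝ) * ENNReal.ofReal (2*ε)
          from ENNReal.ofReal_mul (by positivity), ENNReal.ofReal_natCast]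
    _ ≤ 1 / 2 := by
        have hn' : (0:ℝ) < n := by positivity
        have : (n : ℝ) * (2 * ε) = 1 / 2 := by
          rw [hεdef]; field_simp; ring
        rw [this]
        rw [ENNReal.ofReal_div_of_pos (by norm_num)]
        simp
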